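/- Let f be a Boolean network of dimension n, y a fixed point of f, and u a vertex that does not lie on any positive cycle of the interaction graph G(f). If z is a state such that z_v = y_v for every vertex v in P_u \ {u}, then f_u(z) = y_u. -/

import Mathlib

/-- Asynchronous transition: update one vertex `u` where `f` disagrees with `x`. -/
def AsyncStep {n : ℕ} (f : (Fin n → Bool) → (Fin n → Bool)) (x z : Fin n → Bool) : Prop :=
  ∃ u : Fin n, f x u ≠ x u ∧ z = Function.update x u (f x u)

/-- Reachability: reflexive-transitive closure of the asynchronous transition relation. -/
def Reach {n : ℕ} (f : (Fin n → Bool) → (Fin n → Bool)) :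
    (Fin n → Bool) → (Fin n → Bool) → Prop :=
  Relation.ReflTransGen (AsyncStep f)

/-- An attractor: nonempty, closed under transitions, strongly connected for reachability. -/
def IsAttractor {n : ℕ} (f : (Fin n → Bool) → (Fin n → Bool)) (S : Set (Fin n → Bool)) : Prop :=
  S.Nonempty ∧ (∀ x ∈ S, ∀ z, AsyncStep f x z → z ∈ S) ∧ (∀ x ∈ S, ∀ z ∈ S, Reach f x z)

/-- Positive edge of the interaction graph `G(f)`. -/
def PosEdge {n : ℕ} (f : (Fin n → Bool) → (Fin n → Bool)) (u v : Fin n) : Prop :=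
  ∃ x : Fin n → Bool,
    f (Function.update x u true) v = true ∧ f (Function.update x u false) v = false

/-- Negative edge of the interaction graph `G(f)`. -/
def NegEdge {n : ℕ} (f : (Fin n → Bool) → (Fin n → Bool)) (u v : Fin n) : Prop :=
  ∃ x : Fin n → Bool,
    f (Function.update x u true) v = false ∧ f (Function.update x u false) v = true

/-- Signed edge (`true` = positive, `false` = negative). -/
def SignedEdge {n : ℕ} (f : (Fin n → Bool) → (Fin n → Bool)) (u v : Fin n) (s : Bool) : Prop :=
  match s with
  | true => PosEdge f u v
  | false => NegEdge f u v

/-- A cycle of `G(f)`: a nonempty list of signed edges, consecutively chained,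
the last edge returning to the source of the first. -/
def IsCycle {n : ℕ} (f : (Fin n → Bool) → (Fin n → Bool))
    (es : List (Fin n × Fin n × Bool)) : Prop :=
  es ≠ [] ∧ (∀ e ∈ es, SignedEdge f e.1 e.2.1 e.2.2) ∧
  es.Chain' (fun e e' => e.2.1 = e'.1) ∧
  es.getLast?.map (fun e => e.2.1) = es.head?.map (fun e => e.1)

/-- A positive cycle: a cycle traversing an even number of negative edges. -/
def IsPosCycle {n : ℕ} (f : (Fin n → Bool) → (Fin n → Bool))
    (es : List (Fin n × Fin n × Bool)) : Prop :=
  IsCycle f es ∧ Even (es.countP (fun e => !e.2.2))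

/-- Unsigned edge of the interaction graph. -/
def EdgeU {n : ℕ} (f : (Fin n → Bool) → (Fin n → Bool)) (u v : Fin n) : Prop :=
  PosEdge f u v ∨ NegEdge f u v

/-- `v` is an ancestor of `u`: nonempty directed path from `v` to `u` in `G(f)`. -/
def Ancestor {n : ℕ} (f : (Fin n → Bool) → (Fin n → Bool)) (v u : Fin n) : Prop :=
  Relation.TransGen (EdgeU f) v u

/-- `u` and `v` are in the same strongly connected component of (the unsigned) `G(f)`. -/
def SameSCC {n : ℕ} (f : (Fin n → Bool) → (Fin n → Bool)) (u v : Fin n) : Prop :=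
  Relation.ReflTransGen (EdgeU f) u v ∧ Relation.ReflTransGen (EdgeU f) v u

/-- `u` belongs to an SCC of `G(f)` containing a positive cycle. -/
def InPosSCC {n : ℕ} (f : (Fin n → Bool) → (Fin n → Bool)) (u : Fin n) : Prop :=
  ∃ es, IsPosCycle f es ∧ ∀ v ∈ es.map Prod.fst, SameSCC f v u

open Classical in
/-- The modified network `f[I←y]`. -/
noncomputable def modifyBN {n : ℕ} (f : (Fin n → Bool) → (Fin n → Bool)) (I : Set (Fin n))
    (y : Fin n → Bool) : (Fin n → Bool) → (Fin n → Bool) :=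
  fun x i => if i ∈ I then y i else f x i

open Classical in
/-- The state `x_{[x_I = y_I]}`: equal to `y` on `I`, to `x` elsewhere. -/
noncomputable def patchState {n : ℕ} (x : Fin n → Bool) (I : Set (Fin n)) (y : Fin n → Bool) :
    Fin n → Bool :=
  fun i => if i ∈ I then y i else x i

lemma edge_of_flip {n : ℕ} {f : (Fin n → Bool) → (Fin n → Bool)} {u w : Fin n}
    {x : Fin n → Bool} {b : Bool} (h : f x u ≠ f (Function.update x w b) u) :
    EdgeU f w u := by
  have hx : x = Function.update x w (x w) := (Function.update_eq_self w x).symm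
  rw [hx] at h
  simp only [Function.update_idem] at h
  cases hb : b <;> cases hw : x w <;> rw [hb, hw] at h
  · exact absurd rfl h
  · -- h : f (up true) ≠ f (up false)
    cases ht : f (Function.update x w true) u <;> rw [ht] at h
    · exact Or.inr ⟨x, ht, by revert h; cases f (Function.update x w false) u <;> simp⟩
    · exact Or.inl ⟨x, ht, by revert h; cases f (Function.update x w false) u <;> simp⟩
  · -- h : f (up false) ≠ f (up true)
    cases ht : f (Function.update x w true) u <;> rw [ht] at h
    · exact Or.inr ⟨x, ht, by revert h; cases f (Function.update x w false) u <;> simp⟩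
    · exact Or.inl ⟨x, ht, by revert h; cases f (Function.update x w false) u <;> simp⟩
  · exact absurd rfl h

lemma agree_of_no_edge {n : ℕ} (f : (Fin n → Bool) → (Fin n → Bool)) (u : Fin n) :
    ∀ s : Finset (Fin n), ∀ x x' : Fin n → Bool,
      (∀ v, x v ≠ x' v → v ∈ s) → (∀ v ∈ s, ¬ EdgeU f v u) → f x u = f x' u := by
  intro s
  induction s using Finset.induction_on with
  | empty =>
    intro x x' hd _
    have : x = x' := funext fun v => by
      by_contra hv; exact absurd (hd v hv) (Finset.notMem_empty v)
    rw [this]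
  | @insert a s ha ih =>
    intro x x' hd hne
    set x'' := Function.update x a (x' a) with hx''
    have h1 : f x u = f x'' u := by
      by_contra hneq
      exact hne a (Finset.mem_insert_self a s) (edge_of_flip hneq)
    have h2 : f x'' u = f x' u := by
      refine ih x'' x' (fun v hv => ?_) (fun v hv => hne v (Finset.mem_insert_of_mem hv))
      by_cases hva : v = a
      · subst hva; simp [hx''] at hv
      · rw [hx'', Function.update_of_ne hva] at hv
        rcases Finset.mem_insert.mp (hd v hv) with h | h
        · exact absurd h hva
        · exact h
    exact h1.trans h2

lemma no_pos_loop {n : ℕ} {f : (Fin n → Bool) → (Fin n → Bool)} {u : Fin n}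
    (hu : ¬ ∃ es, IsPosCycle f es ∧ u ∈ es.map Prod.fst) : ¬ PosEdge f u u := by
  intro hp
  refine hu ⟨[(u, u, true)], ⟨⟨by simp, ?_, List.isChain_singleton _, by simp⟩, by simp⟩, by simp⟩
  intro e he
  simp at he
  subst he
  exact hp

/-- if `u` lies on no positive cycle and `z` agrees with the fixed
point `y` on `P_u \\ {u}`, then `f_u(z) = y_u`. -/
theorem stmt4 {n : ℕ} (f : (Fin n → Bool) → (Fin n → Bool)) (y : Fin n → Bool)
    (hy : f y = y) (u : Fin n)
    (hu : ¬ ∃ es, IsPosCycle f es ∧ u ∈ es.map Prod.fst)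
    (z : Fin n → Bool)
    (h : ∀ v : Fin n, Ancestor f v u → v ≠ u → z v = y v) :
    f z u = y u := by
  classical
  set z' := Function.update z u (y u) with hz'
  have hz'u : f z' u = y u := by
    have := agree_of_no_edge f u (Finset.univ.filter (fun v => z' v ≠ y v)) z' y
      (fun v hv => by simpa using hv) ?_
    · rw [this, hy]
    · intro v hv hedge
      simp only [Finset.mem_filter] at hv
      have hvne : v ≠ u := by
        intro he; subst he; simp [hz'] at hv
      have : z v = y v := h v (Relation.TransGen.single hedge) hvne
      rw [hz', Function.update_of_ne hvne] at hv
      exact hv.2 this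
  by_cases hzu : z u = y u
  · have : z' = z := by rw [hz', ← hzu, Function.update_eq_self]
    rw [this] at hz'u; exact hz'u
  · -- z u ≠ y u
    by_contra hne
    apply no_pos_loop hu
    have e1 : Function.update z u (z u) = z := Function.update_eq_self u z
    cases hyu : y u
    · -- y u = false, so z u = true, f z u = true
      have hzt : z u = true := by revert hzu; rw [hyu]; cases z u <;> simp
      have hft : f z u = true := by revert hne; rw [hyu]; cases f z u <;> simp
      have e1' : Function.update z u true = z := by rw [← hzt]; exact e1
      refine ⟨z, ?_, ?_⟩
      · rw [e1']; exact hft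
      · rw [← hyu, ← hz', hz'u, hyu]
    · -- y u = true, so z u = false, f z u = false
      have hzt : z u = false := by revert hzu; rw [hyu]; cases z u <;> simp
      have hft : f z u = false := by revert hne; rw [hyu]; cases f z u <;> simp
      have e1' : Function.update z u false = z := by rw [← hzt]; exact e1
      refine ⟨z, ?_, ?_⟩
      · rw [← hyu, ← hz', hz'u, hyu]
      · rw [e1']; exact hft
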